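/- Let p ∈ (2, ∞). For all x, y ∈ ℝ^d one has |x + y|^p − |x|^p − p|x|^{p−2}⟨x, y⟩ ≥ p |y|² ∫₀¹ (1 − r) |x + r·y|^{p−2} dr, where the term |x|^{p−2}⟨x,y⟩ is interpreted as 0 when x = 0. -/

import Mathlib

open scoped RealInnerProductSpace Classical

section Aux

variable {d : ℕ}

private lemma pow2_rpow (t c : ℝ) (ht : 0 ≤ t) : (t ^ 2) ^ c = t ^ (2 * c) := by
  rw [← Real.rpow_natCast t 2, ← Real.rpow_mul ht]
  norm_num

private lemma aux_norm_sq (x y : EuclideanSpace ℝ (Fin d)) (r : ℝ) :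
    ‖x + r • y‖ ^ 2 = ‖x‖ ^ 2 + 2 * r * ⟪x, y⟫ + r ^ 2 * ‖y‖ ^ 2 := by
  rw [norm_add_sq_real, real_inner_smul_right, norm_smul]
  simp [Real.norm_eq_abs, mul_pow, sq_abs]
  ring

end Aux

/-- Taylor lower bound from the proof of Proposition 3.3: for `p ∈ (2, ∞)` and
`x, y ∈ ℝ^d`, `|x+y|^p - |x|^p - p|x|^(p-2)⟨x,y⟩ ≥ p|y|² ∫₀¹ (1-r)|x+ry|^(p-2) dr`,
the term `|x|^(p-2)⟨x,y⟩` being interpreted as `0` when `x = 0`. -/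
theorem norm_rpow_taylor_integral_lower_bound
    (p : ℝ) (hp : 2 < p) (d : ℕ) (x y : EuclideanSpace ℝ (Fin d)) :
    p * ‖y‖ ^ 2 * ∫ r in (0:ℝ)..1, (1 - r) * ‖x + r • y‖ ^ (p - 2) ≤
      ‖x + y‖ ^ p - ‖x‖ ^ p -
        (if x = 0 then (0 : ℝ) else p * ‖x‖ ^ (p - 2) * ⟪x, y⟫) := by
  have hp2 : (0:ℝ) < p - 2 := by linarith
  set u : ℝ → ℝ := fun r => ‖x‖ ^ 2 + 2 * r * ⟪x, y⟫ + r ^ 2 * ‖y‖ ^ 2 with hu_def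
  set v : ℝ → ℝ := fun r => ⟪x, y⟫ + r * ‖y‖ ^ 2 with hv_def
  have hnorm : ∀ r : ℝ, ‖x + r • y‖ ^ 2 = u r := fun r => aux_norm_sq x y r
  have hu_nonneg : ∀ r, 0 ≤ u r := fun r => (hnorm r) ▸ sq_nonneg _
  have hu' : ∀ r : ℝ, HasDerivAt u (2 * v r) r := by
    intro r
    have h1 : HasDerivAt u (2 * 1 * ⟪x, y⟫ + (2:ℕ) * r ^ (2 - 1) * ‖y‖ ^ 2) r :=
      ((((hasDerivAt_id r).const_mul 2).mul_const _).const_add _).add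
        ((hasDerivAt_pow 2 r).mul_const _)
    convert h1 using 1
    simp only [hv_def]
    push_cast
    ring
  have hv' : ∀ r : ℝ, HasDerivAt v (‖y‖ ^ 2) r := by
    intro r
    have h1 : HasDerivAt (fun s : ℝ => ⟪x, y⟫ + s * ‖y‖ ^ 2) (1 * ‖y‖ ^ 2) r :=
      ((hasDerivAt_id r).mul_const _).const_add _
    rw [one_mul] at h1; exact h1
  set h : ℝ → ℝ := fun r => u r ^ (p / 2 - 1) with hh_def
  set F : ℝ → ℝ := fun r => h r * v r with hF_def
  set g : ℝ → ℝ := fun r => u r ^ (p / 2) with hg_def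
  have hg' : ∀ r : ℝ, HasDerivAt g (p * F r) r := by
    intro r
    have h0 := (Real.hasDerivAt_rpow_const (x := u r) (p := p / 2)
      (Or.inr (by linarith))).comp r (hu' r)
    refine h0.congr_deriv ?_
    simp only [hF_def, hh_def, Function.comp]
    ring
  set w : ℝ → ℝ := fun r => u r ^ (p / 2 - 1 - 1) * v r ^ 2 with hw_def
  have hw_nonneg : ∀ r, 0 ≤ w r := fun r =>
    mul_nonneg (Real.rpow_nonneg (hu_nonneg r) _) (sq_nonneg _)
  have hF' : ∀ r : ℝ, HasDerivAt F ((p - 2) * w r + h r * ‖y‖ ^ 2) r := by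
    intro r
    by_cases hur : u r = 0
    · -- the degenerate point: x + r • y = 0
      have hz : x + r • y = 0 := by
        have h1 := hnorm r
        rw [hur, pow_eq_zero_iff (two_ne_zero)] at h1
        exact norm_eq_zero.mp h1
      have hxeq : x = -(r • y) := by
        rw [eq_neg_iff_add_eq_zero]; exact hz
      have hvs : ∀ s : ℝ, v s = (s - r) * ‖y‖ ^ 2 := by
        intro s
        simp only [hv_def, hxeq, inner_neg_left, real_inner_smul_left,
          real_inner_self_eq_norm_sq]
        ring
      have hvr : v r = 0 := by rw [hvs r]; ring
      have hhr : h r = 0 := by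
        simp only [hh_def, hur]
        exact Real.zero_rpow (by linarith)
      have hwr : w r = 0 := by simp [hw_def, hvr]
      have hFr : F r = 0 := by simp [hF_def, hvr]
      have key : HasDerivAt F 0 r := by
        rw [hasDerivAt_iff_tendsto_slope]
        have heq : ∀ s ∈ ({r}ᶜ : Set ℝ), u s ^ (p / 2 - 1) * ‖y‖ ^ 2 = slope F r s := by
          intro s hs
          have hsr : s - r ≠ 0 := sub_ne_zero.mpr hs
          rw [slope_def_field, hFr]
          rw [eq_div_iff hsr, sub_zero]; simp only [hF_def, hh_def, hvs s]
          ring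
        have hlim : Filter.Tendsto (fun s => u s ^ (p / 2 - 1) * ‖y‖ ^ 2)
            (nhdsWithin r {r}ᶜ) (nhds 0) := by
          have hu_cont : Filter.Tendsto u (nhdsWithin r {r}ᶜ) (nhds 0) := by
            have := (hu' r).continuousAt.tendsto
            rw [hur] at this
            exact this.mono_left nhdsWithin_le_nhds
          have hrp : Filter.Tendsto (fun t : ℝ => t ^ (p / 2 - 1)) (nhds 0)
              (nhds ((0:ℝ) ^ (p / 2 - 1))) :=
            (Real.continuousAt_rpow_const 0 (p / 2 - 1) (Or.inr (by linarith))).tendsto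
          have := (hrp.comp hu_cont).mul_const (‖y‖ ^ 2)
          rw [Real.zero_rpow (by linarith : p / 2 - 1 ≠ 0)] at this
          simpa using this
        exact hlim.congr' (Filter.eventuallyEq_of_mem self_mem_nhdsWithin heq)
      have : (p - 2) * w r + h r * ‖y‖ ^ 2 = 0 := by rw [hwr, hhr]; ring
      rw [this]
      exact key
    · have hh' : HasDerivAt h ((p / 2 - 1) * u r ^ (p / 2 - 1 - 1) * (2 * v r)) r :=
        (Real.hasDerivAt_rpow_const (x := u r) (p := p / 2 - 1)
          (Or.inl hur)).comp r (hu' r)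
      have := hh'.mul (hv' r)
      refine this.congr_deriv ?_
      simp only [hw_def]
      ring
  set P : ℝ → ℝ := fun r => ∫ s in (0:ℝ)..r, (1 - s) * h s with hP_def
  have hu_cont : Continuous u := by
    apply Continuous.add
    apply Continuous.add
    · exact continuous_const
    · exact (continuous_const.mul continuous_id).mul continuous_const
    · exact (continuous_pow 2).mul continuous_const
  have hh_cont : Continuous h :=
    hu_cont.rpow_const (fun r => Or.inr (by linarith))
  have hint_cont : Continuous (fun s : ℝ => (1 - s) * h s) :=
    (continuous_const.sub continuous_id).mul hh_cont
  have hP' : ∀ r : ℝ, HasDerivAt P ((1 - r) * h r) r := by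
    intro r
    exact intervalIntegral.integral_hasDerivAt_right
      (hint_cont.intervalIntegrable 0 r)
      (hint_cont.stronglyMeasurableAtFilter _ _)
      hint_cont.continuousAt
  set ψ : ℝ → ℝ := fun r => g r + (1 - r) * (p * F r) - p * ‖y‖ ^ 2 * P r with hψ_def
  have hψ' : ∀ r : ℝ, HasDerivAt ψ ((1 - r) * (p * (p - 2) * w r)) r := by
    intro r
    have h1 : HasDerivAt (fun s : ℝ => 1 - s) (-1) r := by
      simpa using (hasDerivAt_id r).const_sub 1
    have h2 : HasDerivAt (fun s : ℝ => (1 - s) * (p * F s))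
        (-1 * (p * F r) + (1 - r) * (p * ((p - 2) * w r + h r * ‖y‖ ^ 2))) r :=
      h1.mul ((hF' r).const_mul p)
    have h3 := ((hg' r).add h2).sub ((hP' r).const_mul (p * ‖y‖ ^ 2))
    refine h3.congr_deriv ?_
    simp only [hF_def]
    ring
  have hmono : MonotoneOn ψ (Set.Icc (0:ℝ) 1) := by
    apply monotoneOn_of_deriv_nonneg (convex_Icc 0 1)
    · exact (continuous_iff_continuousAt.mpr fun r => (hψ' r).continuousAt).continuousOn
    · intro r _
      exact (hψ' r).differentiableAt.differentiableWithinAt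
    · intro r hr
      rw [interior_Icc] at hr
      rw [(hψ' r).deriv]
      have hp0 : 0 < p := by linarith
      have : (0:ℝ) ≤ 1 - r := by linarith [hr.2]
      exact mul_nonneg this (mul_nonneg (by positivity) (hw_nonneg r))
  have hkey : ψ 0 ≤ ψ 1 :=
    hmono (Set.mem_Icc.mpr ⟨le_refl 0, zero_le_one⟩)
      (Set.mem_Icc.mpr ⟨zero_le_one, le_refl 1⟩) zero_le_one
  -- compute the endpoint values
  have hg1 : g 1 = ‖x + y‖ ^ p := by
    have : u 1 = ‖x + y‖ ^ 2 := by rw [← hnorm 1, one_smul]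
    rw [hg_def]
    simp only [this]
    rw [pow2_rpow _ _ (norm_nonneg _)]
    congr 1
    ring
  have hg0 : g 0 = ‖x‖ ^ p := by
    have : u 0 = ‖x‖ ^ 2 := by rw [← hnorm 0, zero_smul, add_zero]
    rw [hg_def]
    simp only [this]
    rw [pow2_rpow _ _ (norm_nonneg _)]
    congr 1
    ring
  have hF0 : p * F 0 = p * ‖x‖ ^ (p - 2) * ⟪x, y⟫ := by
    have hu0 : u 0 = ‖x‖ ^ 2 := by rw [← hnorm 0, zero_smul, add_zero]
    have hv0 : v 0 = ⟪x, y⟫ := by simp [hv_def]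
    simp only [hF_def, hh_def, hu0, hv0]
    rw [pow2_rpow _ _ (norm_nonneg _)]
    have : 2 * (p / 2 - 1) = p - 2 := by ring
    rw [this]
    ring
  have hP0 : P 0 = 0 := by simp [hP_def]
  have hP1 : P 1 = ∫ r in (0:ℝ)..1, (1 - r) * ‖x + r • y‖ ^ (p - 2) := by
    rw [hP_def]
    apply intervalIntegral.integral_congr
    intro s _
    simp only [hh_def, ← hnorm s]
    rw [pow2_rpow _ _ (norm_nonneg _)]
    congr 1
    ring
  have hif : (if x = 0 then (0:ℝ) else p * ‖x‖ ^ (p - 2) * ⟪x, y⟫)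
      = p * ‖x‖ ^ (p - 2) * ⟪x, y⟫ := by
    split_ifs with hx0
    · subst hx0
      simp
    · rfl
  rw [hif, ← hP1]
  have := hkey
  simp only [hψ_def, hg1, hg0, hP0, hF0] at this
  linarith
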